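/- Let (X,d) be a metric space, θ=(k_r) a lacunary sequence, f any unbounded modulus function, (A_k) a sequence in CL(X) and A ∈ CL(X). If (A_k) is Wijsman θ-lacunary f-strong Cesàro convergent to A, then (A_k) is Wijsman θ-lacunary f-statistically convergent to A. -/
import Mathlib


open Filter Metric Set

/-- `f : ℝ → ℝ` is an (unbounded) modulus function (considered on `[0,∞)`):
`f x = 0 ↔ x = 0`, subadditive, increasing, continuous from the right at `0`,
and unbounded. -/
def IsModulus (f : ℝ → ℝ) : Prop :=
  (∀ x ∈ Set.Ici (0:ℝ), 0 ≤ f x) ∧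
  (∀ x ∈ Set.Ici (0:ℝ), (f x = 0 ↔ x = 0)) ∧
  (∀ x ∈ Set.Ici (0:ℝ), ∀ y ∈ Set.Ici (0:ℝ), f (x + y) ≤ f x + f y) ∧
  MonotoneOn f (Set.Ici (0:ℝ)) ∧
  ContinuousWithinAt f (Set.Ici (0:ℝ)) 0 ∧
  (∀ M : ℝ, ∃ x ∈ Set.Ici (0:ℝ), M < f x)

/-- `φ(ε) = limsup_n f(nε)/f(n)`. -/
noncomputable def modPhi (f : ℝ → ℝ) (ε : ℝ) : ℝ :=
  Filter.limsup (fun n : ℕ => f ((n : ℝ) * ε) / f (n : ℝ)) Filter.atTop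

/-- A modulus function is compatible if `φ(ε) → 0` as `ε → 0⁺`. -/
def Compatible (f : ℝ → ℝ) : Prop :=
  Filter.Tendsto (modPhi f) (nhdsWithin 0 (Set.Ioi 0)) (nhds 0)

/-- Wijsman statistical convergence of a sequence of subsets of a metric space. -/
def WijsmanStatConv {X : Type*} [MetricSpace X] (A : ℕ → Set X) (B : Set X) : Prop :=
  ∀ x : X, ∀ ε > (0:ℝ),
    Filter.Tendsto (fun n : ℕ =>
      (((Finset.range n).filter
        (fun j => ε < |infDist x (A j) - infDist x B|)).card : ℝ) / (n : ℝ))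
      Filter.atTop (nhds 0)

/-- Wijsman `f`-statistical convergence of a sequence of subsets of a metric space. -/
def WijsmanFStatConv {X : Type*} [MetricSpace X] (f : ℝ → ℝ) (A : ℕ → Set X)
    (B : Set X) : Prop :=
  ∀ x : X, ∀ ε > (0:ℝ),
    Filter.Tendsto (fun n : ℕ =>
      f ((((Finset.range n).filter
        (fun j => ε < |infDist x (A j) - infDist x B|)).card : ℝ)) / f (n : ℝ))
      Filter.atTop (nhds 0)

/-- A real sequence is `f`-strong Cesàro convergent to `L`. -/
def FStrongCesaro (f : ℝ → ℝ) (x : ℕ → ℝ) (L : ℝ) : Prop :=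
  Filter.Tendsto (fun n : ℕ =>
    f (∑ j ∈ Finset.range n, |x j - L|) / f (n : ℝ)) Filter.atTop (nhds 0)

/-- Wijsman `f`-strong Cesàro convergence. -/
def WijsmanFStrongCesaro {X : Type*} [MetricSpace X] (f : ℝ → ℝ) (A : ℕ → Set X)
    (B : Set X) : Prop :=
  ∀ x : X, FStrongCesaro f (fun j => infDist x (A j)) (infDist x B)

/-- Wijsman strong Cesàro convergence (the case `f = id`). -/
def WijsmanStrongCesaro {X : Type*} [MetricSpace X] (A : ℕ → Set X) (B : Set X) : Prop :=
  ∀ x : X,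
    Filter.Tendsto (fun n : ℕ =>
      (∑ j ∈ Finset.range n, |infDist x (A j) - infDist x B|) / (n : ℝ))
      Filter.atTop (nhds 0)

/-- A real sequence is uniformly integrable. -/
def UnifIntegrable (x : ℕ → ℝ) : Prop :=
  Filter.Tendsto (fun c : ℝ =>
    ⨆ n : ℕ, (∑ j ∈ Finset.range n, if c ≤ |x j| then |x j| else 0) / (n : ℝ))
    Filter.atTop (nhds 0)

/-- Wijsman uniform integrability. -/
def WijsmanUnifIntegrable {X : Type*} [MetricSpace X] (A : ℕ → Set X) : Prop :=
  ∀ x : X, UnifIntegrable (fun j => infDist x (A j))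

/-- A lacunary sequence: strictly increasing, starting at `0`,
with gaps `h_r = k_{r+1} - k_r → ∞`. -/
def IsLacunary (k : ℕ → ℕ) : Prop :=
  k 0 = 0 ∧ StrictMono k ∧
    Filter.Tendsto (fun r : ℕ => k (r + 1) - k r) Filter.atTop Filter.atTop

/-- The gaps `h_r` of a lacunary sequence. -/
def lacH (k : ℕ → ℕ) (r : ℕ) : ℕ := k (r + 1) - k r

/-- The blocks `I_r = (k_r, k_{r+1}]` of a lacunary sequence. -/
def lacI (k : ℕ → ℕ) (r : ℕ) : Finset ℕ := Finset.Ioc (k r) (k (r + 1))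

/-- `φ_θ(ε) = limsup_t f(h_t ε)/f(h_t)`. -/
noncomputable def modPhiTheta (f : ℝ → ℝ) (k : ℕ → ℕ) (ε : ℝ) : ℝ :=
  Filter.limsup (fun t : ℕ => f ((lacH k t : ℝ) * ε) / f ((lacH k t : ℝ))) Filter.atTop

/-- `f` is `θ`-compatible if `φ_θ(ε) → 0` as `ε → 0⁺`. -/
def ThetaCompatible (f : ℝ → ℝ) (k : ℕ → ℕ) : Prop :=
  Filter.Tendsto (modPhiTheta f k) (nhdsWithin 0 (Set.Ioi 0)) (nhds 0)

/-- Wijsman `θ`-lacunary statistical convergence. -/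
def WijsmanLacStatConv {X : Type*} [MetricSpace X] (k : ℕ → ℕ) (A : ℕ → Set X)
    (B : Set X) : Prop :=
  ∀ x : X, ∀ ε > (0:ℝ),
    Filter.Tendsto (fun r : ℕ =>
      (((lacI k r).filter
        (fun j => ε < |infDist x (A j) - infDist x B|)).card : ℝ) / (lacH k r : ℝ))
      Filter.atTop (nhds 0)

/-- Wijsman `θ`-lacunary `f`-statistical convergence. -/
def WijsmanLacFStatConv {X : Type*} [MetricSpace X] (f : ℝ → ℝ) (k : ℕ → ℕ)
    (A : ℕ → Set X) (B : Set X) : Prop :=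
  ∀ x : X, ∀ ε > (0:ℝ),
    Filter.Tendsto (fun r : ℕ =>
      f ((((lacI k r).filter
        (fun j => ε < |infDist x (A j) - infDist x B|)).card : ℝ)) / f ((lacH k r : ℝ)))
      Filter.atTop (nhds 0)

/-- Wijsman `θ`-lacunary `f`-strong Cesàro convergence. -/
def WijsmanLacFStrongCesaro {X : Type*} [MetricSpace X] (f : ℝ → ℝ) (k : ℕ → ℕ)
    (A : ℕ → Set X) (B : Set X) : Prop :=
  ∀ x : X,
    Filter.Tendsto (fun r : ℕ =>
      f (∑ j ∈ lacI k r, |infDist x (A j) - infDist x B|) / f ((lacH k r : ℝ)))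
      Filter.atTop (nhds 0)

/-- Wijsman `θ`-lacunary strong Cesàro convergence (the case `f = id`). -/
def WijsmanLacStrongCesaro {X : Type*} [MetricSpace X] (k : ℕ → ℕ)
    (A : ℕ → Set X) (B : Set X) : Prop :=
  ∀ x : X,
    Filter.Tendsto (fun r : ℕ =>
      (∑ j ∈ lacI k r, |infDist x (A j) - infDist x B|) / (lacH k r : ℝ))
      Filter.atTop (nhds 0)

/-- A real sequence is `θ`-lacunary uniformly integrable. -/
def LacUnifIntegrable (k : ℕ → ℕ) (x : ℕ → ℝ) : Prop :=
  Filter.Tendsto (fun M : ℝ =>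
    ⨆ t : ℕ, (∑ j ∈ lacI k t, if M ≤ |x j| then |x j| else 0) / (lacH k t : ℝ))
    Filter.atTop (nhds 0)

/-- Wijsman `θ`-lacunary uniform integrability. -/
def WijsmanLacUnifIntegrable {X : Type*} [MetricSpace X] (k : ℕ → ℕ)
    (A : ℕ → Set X) : Prop :=
  ∀ x : X, LacUnifIntegrable k (fun j => infDist x (A j))


lemma modulus_nat_mul {f : ℝ → ℝ} (hf : IsModulus f) (n : ℕ) {x : ℝ} (hx : 0 ≤ x) :
    f ((n : ℝ) * x) ≤ n * f x := by
  obtain ⟨h0, hiff, hsub, hmono, _, _⟩ := hf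
  induction n with
  | zero =>
    have h00 : f 0 = 0 := (hiff 0 (Set.mem_Ici.mpr le_rfl)).mpr rfl
    simp [h00]
  | succ n ih =>
    push_cast
    rw [add_mul, one_mul]
    calc f ((n : ℝ) * x + x) ≤ f ((n : ℝ) * x) + f x :=
          hsub _ (Set.mem_Ici.mpr (by positivity)) _ (Set.mem_Ici.mpr hx)
      _ ≤ n * f x + f x := by linarith
      _ = ((n : ℝ) + 1) * f x := by ring

theorem wijsman_lac_fcesaro_imp_lac_fstat {X : Type*} [MetricSpace X]
    (k : ℕ → ℕ) (hk : IsLacunary k) (f : ℝ → ℝ) (hf : IsModulus f)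
    (A : ℕ → Set X) (B : Set X)
    (hA : ∀ n, (A n).Nonempty ∧ IsClosed (A n)) (hB : B.Nonempty ∧ IsClosed B)
    (h : WijsmanLacFStrongCesaro f k A B) : WijsmanLacFStatConv f k A B := by
  intro x ε hε
  have hx := h x
  obtain ⟨hnn, hiff, hsub, hmono, _, _⟩ := hf
  set m : ℕ := ⌈ε⁻¹⌉₊ with hm
  have hH : ∀ᶠ r in atTop, 1 ≤ lacH k r := hk.2.2.eventually_ge_atTop 1
  have hbound : Tendsto (fun r : ℕ => (m : ℝ) *
      (f (∑ j ∈ lacI k r, |infDist x (A j) - infDist x B|) / f ((lacH k r : ℝ))))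
      atTop (nhds 0) := by
    simpa using hx.const_mul (m : ℝ)
  apply squeeze_zero' (g := fun r => (m : ℝ) *
      (f (∑ j ∈ lacI k r, |infDist x (A j) - infDist x B|) / f ((lacH k r : ℝ))))
    ?_ ?_ hbound
  · filter_upwards with r
    exact div_nonneg (hnn _ (Set.mem_Ici.mpr (by positivity))) (hnn _ (Set.mem_Ici.mpr (by positivity)))
  · filter_upwards [hH] with r hr
    set S := (lacI k r).filter (fun j => ε < |infDist x (A j) - infDist x B|) with hS
    set s := ∑ j ∈ lacI k r, |infDist x (A j) - infDist x B| with hsdef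
    have hs0 : 0 ≤ s := Finset.sum_nonneg fun j _ => abs_nonneg _
    have hcardε : (S.card : ℝ) * ε ≤ s := by
      calc (S.card : ℝ) * ε = ∑ _j ∈ S, ε := by
            rw [Finset.sum_const, nsmul_eq_mul]
        _ ≤ ∑ j ∈ S, |infDist x (A j) - infDist x B| :=
            Finset.sum_le_sum fun j hj => le_of_lt (Finset.mem_filter.mp hj).2
        _ ≤ s := Finset.sum_le_sum_of_subset_of_nonneg (Finset.filter_subset _ _)
            (fun j _ _ => abs_nonneg _)
    have hcard : (S.card : ℝ) ≤ (m : ℝ) * s := by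
      have h1 : (S.card : ℝ) ≤ s * ε⁻¹ := by
        rw [← div_eq_mul_inv, le_div_iff₀ hε]; exact hcardε
      have h2 : s * ε⁻¹ ≤ (m : ℝ) * s := by
        rw [mul_comm s]; exact mul_le_mul_of_nonneg_right (Nat.le_ceil _) hs0
      linarith
    have hf1 : f ((S.card : ℝ)) ≤ f ((m : ℝ) * s) :=
      hmono (Set.mem_Ici.mpr (by positivity)) (Set.mem_Ici.mpr (by positivity)) hcard
    have hf2 : f ((m : ℝ) * s) ≤ (m : ℝ) * f s :=
      modulus_nat_mul ⟨hnn, hiff, hsub, hmono, by assumption, by assumption⟩ m hs0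
    have hpos : (0:ℝ) < (lacH k r : ℝ) := by
      exact_mod_cast Nat.lt_of_lt_of_le Nat.zero_lt_one hr
    have hden : 0 < f ((lacH k r : ℝ)) := by
      rcases (hnn _ (Set.mem_Ici.mpr hpos.le)).lt_or_eq with h' | h'
      · exact h'
      · exact absurd ((hiff _ (Set.mem_Ici.mpr hpos.le)).mp h'.symm) hpos.ne'
    calc f ((S.card : ℝ)) / f ((lacH k r : ℝ))
        ≤ ((m : ℝ) * f s) / f ((lacH k r : ℝ)) := by
          gcongr
          exact le_trans hf1 hf2
      _ = (m : ℝ) * (f s / f ((lacH k r : ℝ))) := mul_div_assoc _ _ _
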